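/- Let d be a natural number, let μ ∈ EuclideanSpace ℝ (Fin d), let S be a positive semidefinite symmetric d × d real matrix, and let A be a d × d real orthogonal matrix regarded as a linear map on EuclideanSpace ℝ (Fin d). If the pushforward of the multivariate Gaussian measure with mean μ and covariance S under x ↦ A • x equals the multivariate Gaussian measure with mean μ and covariance S, then A • μ = μ and A * S * Aᵀ = S. -/

import Mathlib

open MeasureTheory ProbabilityTheory Matrix Complex Real
open scoped ENNReal NNReal

noncomputable section

-- Fubini for the standard Gaussian product measure
lemma pi_gauss_integral {d : ℕ} (f : Fin d → ℝ → ℂ) :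
    ∫ x : Fin d → ℝ, ∏ i, f i (x i) ∂(Measure.pi fun _ => gaussianReal 0 1)
      = ∏ i, ∫ x, f i x ∂(gaussianReal 0 1) := by
  letI : MeasureSpace ℝ := ⟨gaussianReal 0 1⟩
  haveI : SigmaFinite (volume : Measure ℝ) :=
    (inferInstance : SigmaFinite (gaussianReal 0 1))
  exact MeasureTheory.integral_fintype_prod_eq_prod f

-- 1D characteristic function of the standard Gaussian
lemma charfun_gauss_std (c : ℝ) :
    ∫ x : ℝ, Complex.exp (c * x * Complex.I) ∂(gaussianReal 0 1)
      = Complex.exp (-(c ^ 2) / 2) := by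
  rw [gaussianReal_of_var_ne_zero 0 one_ne_zero]
  have hd : (gaussianPDF 0 1) = fun x => ((gaussianPDFReal 0 1 x).toNNReal : ℝ≥0∞) := by
    ext x; rfl
  rw [hd, integral_withDensity_eq_integral_smul
    ((measurable_gaussianPDFReal 0 1).real_toNNReal)]
  have key : ∀ x : ℝ, (gaussianPDFReal 0 1 x).toNNReal • Complex.exp (c * x * Complex.I)
      = ((Real.sqrt (2 * π))⁻¹ : ℂ)
          * Complex.exp (-(1/2 : ℂ) * ((x : ℂ) + -(c : ℂ) * Complex.I) ^ 2)
          * Complex.exp (-(c : ℂ) ^ 2 / 2) := by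
    intro x
    have hnn : 0 ≤ gaussianPDFReal 0 1 x := gaussianPDFReal_nonneg 0 1 x
    have h1 : (gaussianPDFReal 0 1 x).toNNReal • Complex.exp (c * x * Complex.I)
        = ((Real.sqrt (2 * π))⁻¹ : ℂ)
            * Complex.exp (-(x : ℂ) ^ 2 / 2 + c * x * Complex.I) := by
      rw [NNReal.smul_def, Real.coe_toNNReal _ hnn, Complex.real_smul, gaussianPDFReal]
      push_cast
      rw [mul_assoc, ← Complex.exp_add]
      norm_num
    have h2 : (-(1/2 : ℂ)) * ((x : ℂ) + -(c : ℂ) * Complex.I) ^ 2 + -(c : ℂ) ^ 2 / 2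
        = -(x : ℂ) ^ 2 / 2 + (c : ℂ) * (x : ℂ) * Complex.I := by
      linear_combination (-(c : ℂ) ^ 2 / 2) * Complex.I_sq
    rw [h1, mul_assoc ((Real.sqrt (2 * π))⁻¹ : ℂ), ← Complex.exp_add, h2]
  simp_rw [key]
  rw [integral_mul_const, integral_const_mul]
  have hint := GaussianFourier.integral_cexp_neg_mul_sq_add_real_mul_I
    (b := (1/2 : ℂ)) (by norm_num) (-c)
  push_cast at hint
  rw [hint]
  have hsq : ((π : ℂ) / (1/2)) ^ ((1:ℂ)/2) = (Real.sqrt (2 * π) : ℂ) := by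
    have h2π : (0:ℝ) ≤ 2 * π := by positivity
    rw [Real.sqrt_eq_rpow, Complex.ofReal_cpow h2π]
    norm_num
    congr 1
    ring
  rw [hsq]
  have hne : (Real.sqrt (2 * π) : ℂ) ≠ 0 :=
    Complex.ofReal_ne_zero.mpr (by positivity)
  rw [inv_mul_cancel₀ hne, one_mul]

-- characteristic function of the standard Gaussian product measure
lemma charfun_pi {d : ℕ} (c : Fin d → ℝ) :
    ∫ x : Fin d → ℝ, Complex.exp ((c ⬝ᵥ x : ℝ) * Complex.I)
        ∂(Measure.pi fun _ => gaussianReal 0 1)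
      = Complex.exp (-((c ⬝ᵥ c : ℝ) : ℂ) / 2) := by
  have h1 : ∀ x : Fin d → ℝ, Complex.exp ((c ⬝ᵥ x : ℝ) * Complex.I)
      = ∏ i, Complex.exp ((c i : ℂ) * (x i : ℂ) * Complex.I) := by
    intro x
    rw [← Complex.exp_sum]
    congr 1
    rw [dotProduct]
    push_cast
    rw [Finset.sum_mul]
  simp_rw [h1]
  rw [pi_gauss_integral (fun i x => Complex.exp ((c i : ℂ) * (x : ℂ) * Complex.I))]
  simp_rw [charfun_gauss_std]
  rw [← Complex.exp_sum]
  congr 1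
  rw [dotProduct]
  push_cast
  rw [← Finset.sum_div, ← Finset.sum_neg_distrib]
  congr 1
  refine Finset.sum_congr rfl fun i _ => by ring

lemma measurable_mulVec {d : ℕ} (B : Matrix (Fin d) (Fin d) ℝ) :
    Measurable (fun x : Fin d → ℝ => B.mulVec x) := by
  refine measurable_pi_iff.mpr fun i => ?_
  show Measurable fun x : Fin d → ℝ => ∑ j, B i j * x j
  exact Finset.measurable_sum _ fun j _ => (measurable_pi_apply j).const_mul _

lemma measurable_affine {d : ℕ} (m : EuclideanSpace ℝ (Fin d)) (B : Matrix (Fin d) (Fin d) ℝ) :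
    Measurable (fun x : Fin d → ℝ =>
      m + (WithLp.equiv 2 (Fin d → ℝ)).symm (B.mulVec x)) :=
  Measurable.const_add
    (((MeasurableEquiv.toLp 2 (Fin d → ℝ)).symm).symm.measurable.comp (measurable_mulVec B)) m

lemma measurable_charfun_integrand {d : ℕ} (t : Fin d → ℝ) :
    Measurable (fun y : EuclideanSpace ℝ (Fin d) =>
      Complex.exp (((t ⬝ᵥ (WithLp.equiv 2 (Fin d → ℝ) y) : ℝ) : ℂ) * Complex.I)) := by
  have hdot : Measurable (fun y : EuclideanSpace ℝ (Fin d) =>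
      t ⬝ᵥ (WithLp.equiv 2 (Fin d → ℝ) y)) := by
    show Measurable fun y : EuclideanSpace ℝ (Fin d) =>
      ∑ j, t j * ((MeasurableEquiv.toLp 2 (Fin d → ℝ)).symm y) j
    exact Finset.measurable_sum _ fun j _ =>
      ((measurable_pi_apply j).comp
        ((MeasurableEquiv.toLp 2 (Fin d → ℝ)).symm).measurable).const_mul _
  exact Complex.measurable_exp.comp
    ((Complex.measurable_ofReal.comp hdot).mul_const _)

lemma charfun_affine {d : ℕ} (m : EuclideanSpace ℝ (Fin d)) (B : Matrix (Fin d) (Fin d) ℝ)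
    (t : Fin d → ℝ) :
    ∫ y, Complex.exp (((t ⬝ᵥ (WithLp.equiv 2 (Fin d → ℝ) y) : ℝ) : ℂ) * Complex.I)
        ∂(Measure.map (fun x : Fin d → ℝ =>
            m + (WithLp.equiv 2 (Fin d → ℝ)).symm (B.mulVec x))
          (Measure.pi fun _ : Fin d => gaussianReal 0 1))
      = Complex.exp (((t ⬝ᵥ (WithLp.equiv 2 (Fin d → ℝ) m) : ℝ) : ℂ) * Complex.I)
          * Complex.exp (-(((Bᵀ.mulVec t) ⬝ᵥ (Bᵀ.mulVec t) : ℝ) : ℂ) / 2) := by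
  rw [integral_map (measurable_affine m B).aemeasurable
    (measurable_charfun_integrand t).aestronglyMeasurable]
  have h1 : ∀ x : Fin d → ℝ,
      (t ⬝ᵥ (WithLp.equiv 2 (Fin d → ℝ)
          (m + (WithLp.equiv 2 (Fin d → ℝ)).symm (B.mulVec x))) : ℝ)
        = t ⬝ᵥ (WithLp.equiv 2 (Fin d → ℝ) m) + (Bᵀ.mulVec t) ⬝ᵥ x := by
    intro x
    have : (WithLp.equiv 2 (Fin d → ℝ))
        (m + (WithLp.equiv 2 (Fin d → ℝ)).symm (B.mulVec x))
        = (WithLp.equiv 2 (Fin d → ℝ)) m + B.mulVec x := rfl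
    rw [this, dotProduct_add, Matrix.dotProduct_mulVec, ← Matrix.mulVec_transpose]
  simp_rw [h1, Complex.ofReal_add, add_mul, Complex.exp_add]
  rw [integral_const_mul, charfun_pi]

lemma quad_form_eq {d : ℕ} (B : Matrix (Fin d) (Fin d) ℝ) (t : Fin d → ℝ) :
    (Bᵀ.mulVec t) ⬝ᵥ (Bᵀ.mulVec t) = t ⬝ᵥ ((B * Bᵀ).mulVec t) := by
  conv_rhs => rw [← Matrix.mulVec_mulVec, Matrix.dotProduct_mulVec, ← Matrix.mulVec_transpose]

lemma phase_eq {a c : ℝ}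
    (h : ∀ s : ℝ, Complex.exp (((s * a : ℝ) : ℂ) * Complex.I)
      = Complex.exp (((s * c : ℝ) : ℂ) * Complex.I)) : a = c := by
  by_contra hne
  have hac : a - c ≠ 0 := sub_ne_zero.mpr hne
  set s : ℝ := π / (a - c) with hs
  have h1 : Complex.exp (((s * a - s * c : ℝ) : ℂ) * Complex.I) = 1 := by
    rw [Complex.ofReal_sub, sub_mul, Complex.exp_sub, h s, div_self (Complex.exp_ne_zero _)]
  rw [Complex.exp_eq_one_iff] at h1
  obtain ⟨n, hn⟩ := h1
  have him := congrArg Complex.im hn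
  simp at him
  have hsac : s * a - s * c = π := by
    rw [hs]; field_simp
  rw [hsac] at him
  have h2 : (2 * n : ℤ) = 1 := by
    have hπ := Real.pi_ne_zero
    have : (2 * (n : ℝ)) = 1 := by
      nlinarith [him, Real.pi_pos]
    exact_mod_cast this
  omega

lemma quad_matrix_eq {d : ℕ} {M N : Matrix (Fin d) (Fin d) ℝ} (hM : M.IsSymm) (hN : N.IsSymm)
    (h : ∀ t : Fin d → ℝ, t ⬝ᵥ (M.mulVec t) = t ⬝ᵥ (N.mulVec t)) : M = N := by
  ext i j
  have hij := h (Pi.single i 1 + Pi.single j 1)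
  have hii := h (Pi.single i 1)
  have hjj := h (Pi.single j 1)
  simp only [Matrix.mulVec_add, dotProduct_add, add_dotProduct,
    Matrix.mulVec_single_one, Matrix.col_apply, Matrix.transpose_apply, single_dotProduct, mul_one, one_mul] at hij hii hjj
  have hMji := hM.apply i j
  have hNji := hN.apply i j
  simp only [hMji, hNji] at hij
  linarith

lemma split_exp {a c q1 q2 : ℝ}
    (h : Complex.exp ((a : ℂ) * Complex.I) * Complex.exp (-(q1 : ℂ) / 2)
      = Complex.exp ((c : ℂ) * Complex.I) * Complex.exp (-(q2 : ℂ) / 2)) :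
    q1 = q2 ∧ Complex.exp ((a : ℂ) * Complex.I) = Complex.exp ((c : ℂ) * Complex.I) := by
  have hc1 : (-(q1 : ℂ) / 2) = ((-q1 / 2 : ℝ) : ℂ) := by push_cast; ring
  have hc2 : (-(q2 : ℂ) / 2) = ((-q2 / 2 : ℝ) : ℂ) := by push_cast; ring
  rw [hc1, hc2] at h
  have habs := congrArg (‖·‖) h
  rw [norm_mul, norm_mul, Complex.norm_exp_ofReal_mul_I, Complex.norm_exp_ofReal_mul_I,
    one_mul, one_mul, Complex.norm_exp, Complex.norm_exp, Complex.ofReal_re,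
    Complex.ofReal_re, Real.exp_eq_exp] at habs
  have hq : q1 = q2 := by linarith
  refine ⟨hq, ?_⟩
  rw [hq] at h
  exact mul_right_cancel₀ (Complex.exp_ne_zero _) h

lemma psd_sqrt_transpose {d : ℕ} {S : Matrix (Fin d) (Fin d) ℝ} (hS : S.PosSemidef) :
    (hS.1.eigenvectorUnitary.1 * diagonal (Real.sqrt ∘ hS.1.eigenvalues) *
      (star hS.1.eigenvectorUnitary : Matrix (Fin d) (Fin d) ℝ))ᵀ
      = hS.1.eigenvectorUnitary.1 * diagonal (Real.sqrt ∘ hS.1.eigenvalues) *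
      (star hS.1.eigenvectorUnitary : Matrix (Fin d) (Fin d) ℝ) := by
  simp [Matrix.transpose_mul, Matrix.star_eq_conjTranspose,
    Matrix.conjTranspose_eq_transpose_of_trivial, Matrix.mul_assoc]

lemma psd_sqrt_mul_self {d : ℕ} {S : Matrix (Fin d) (Fin d) ℝ} (hS : S.PosSemidef) :
    (hS.1.eigenvectorUnitary.1 * diagonal (Real.sqrt ∘ hS.1.eigenvalues) *
      (star hS.1.eigenvectorUnitary : Matrix (Fin d) (Fin d) ℝ)) *
    (hS.1.eigenvectorUnitary.1 * diagonal (Real.sqrt ∘ hS.1.eigenvalues) *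
      (star hS.1.eigenvectorUnitary : Matrix (Fin d) (Fin d) ℝ)) = S := by
  have hU : (star hS.1.eigenvectorUnitary : Matrix (Fin d) (Fin d) ℝ) *
      hS.1.eigenvectorUnitary.1 = 1 := Unitary.star_mul_self_of_mem hS.1.eigenvectorUnitary.2
  have hD : diagonal (Real.sqrt ∘ hS.1.eigenvalues) * diagonal (Real.sqrt ∘ hS.1.eigenvalues)
      = diagonal (RCLike.ofReal ∘ hS.1.eigenvalues) := by
    rw [diagonal_mul_diagonal]
    congr 1
    funext i
    simp [Real.mul_self_sqrt (hS.eigenvalues_nonneg i)]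
  calc _ = hS.1.eigenvectorUnitary.1 * (diagonal (Real.sqrt ∘ hS.1.eigenvalues) *
        ((star hS.1.eigenvectorUnitary : Matrix (Fin d) (Fin d) ℝ) *
        hS.1.eigenvectorUnitary.1) * diagonal (Real.sqrt ∘ hS.1.eigenvalues)) *
        (star hS.1.eigenvectorUnitary : Matrix (Fin d) (Fin d) ℝ) := by
          simp only [Matrix.mul_assoc]
    _ = S := by
      rw [hU, Matrix.mul_one, hD]
      conv_rhs => rw [hS.1.spectral_theorem]
      simp [Unitary.conjStarAlgAut_apply]

end

/-- The multivariate Gaussian measure on `EuclideanSpace ℝ (Fin d)` with mean `μ` and positive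
semidefinite covariance matrix `S`: the pushforward of a standard i.i.d. Gaussian vector under
`x ↦ μ + √S x`.  Its characteristic function at `t` is `exp (i⟪t, μ⟫ - ⟪t, S t⟫ / 2)`. -/
noncomputable def multivariateGaussian {d : ℕ} (μ : EuclideanSpace ℝ (Fin d))
    (S : Matrix (Fin d) (Fin d) ℝ) (hS : S.PosSemidef) :
    Measure (EuclideanSpace ℝ (Fin d)) :=
  Measure.map
    (fun x => μ + (WithLp.equiv 2 (Fin d → ℝ)).symm ((hS.1.eigenvectorUnitary.1 * diagonal (Real.sqrt ∘ hS.1.eigenvalues) *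
      (star hS.1.eigenvectorUnitary : Matrix (Fin d) (Fin d) ℝ)).mulVec (WithLp.equiv 2 (Fin d → ℝ) x)))
    (Measure.map (WithLp.equiv 2 (Fin d → ℝ)).symm (Measure.pi fun _ : Fin d => gaussianReal 0 1))

set_option maxHeartbeats 2000000 in
/-- If the multivariate Gaussian measure with mean `μ` and covariance `S` is
invariant under the orthogonal linear map `x ↦ A x`, then `A μ = μ` and `A S Aᵀ = S`. -/
theorem multivariateGaussian_map_invariant_necessary (d : ℕ) (μ : EuclideanSpace ℝ (Fin d))
    (S : Matrix (Fin d) (Fin d) ℝ) (hS : S.PosSemidef) (hSsymm : S.IsSymm)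
    (A : Matrix (Fin d) (Fin d) ℝ) (hA : A ∈ Matrix.orthogonalGroup (Fin d) ℝ)
    (hmap : Measure.map
      (fun x : EuclideanSpace ℝ (Fin d) =>
        (WithLp.equiv 2 (Fin d → ℝ)).symm (A.mulVec (WithLp.equiv 2 (Fin d → ℝ) x)))
      (multivariateGaussian μ S hS) = multivariateGaussian μ S hS) :
    (WithLp.equiv 2 (Fin d → ℝ)).symm (A.mulVec (WithLp.equiv 2 (Fin d → ℝ) μ)) = μ ∧
      A * S * Aᵀ = S := by
  classical
  set ν : Measure (Fin d → ℝ) := Measure.pi fun _ => gaussianReal 0 1 with hν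
  set R : Matrix (Fin d) (Fin d) ℝ := hS.1.eigenvectorUnitary.1 * diagonal (Real.sqrt ∘ hS.1.eigenvalues) *
      (star hS.1.eigenvectorUnitary : Matrix (Fin d) (Fin d) ℝ) with hR
  have hRR : R * R = S := psd_sqrt_mul_self hS
  have hsqrtT : Rᵀ = R := psd_sqrt_transpose hS
  have houter : Measurable (fun x : EuclideanSpace ℝ (Fin d) =>
      μ + (WithLp.equiv 2 (Fin d → ℝ)).symm (R.mulVec (WithLp.equiv 2 (Fin d → ℝ) x))) :=
    Measurable.const_add
      (((MeasurableEquiv.toLp 2 (Fin d → ℝ)).symm).symm.measurable.comp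
        ((measurable_mulVec R).comp
          ((MeasurableEquiv.toLp 2 (Fin d → ℝ)).symm).measurable)) μ
  have hAmeas : Measurable (fun x : EuclideanSpace ℝ (Fin d) =>
      (WithLp.equiv 2 (Fin d → ℝ)).symm (A.mulVec (WithLp.equiv 2 (Fin d → ℝ) x))) :=
    ((MeasurableEquiv.toLp 2 (Fin d → ℝ)).symm).symm.measurable.comp
      ((measurable_mulVec A).comp ((MeasurableEquiv.toLp 2 (Fin d → ℝ)).symm).measurable)
  have hg : multivariateGaussian μ S hS
      = Measure.map (fun x : Fin d → ℝ =>
          μ + (WithLp.equiv 2 (Fin d → ℝ)).symm (R.mulVec x)) ν := by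
    have hesymm : Measurable
        (⇑(WithLp.equiv 2 (Fin d → ℝ)).symm : (Fin d → ℝ) → EuclideanSpace ℝ (Fin d)) :=
      ((MeasurableEquiv.toLp 2 (Fin d → ℝ)).symm).symm.measurable
    rw [_root_.multivariateGaussian, Measure.map_map houter hesymm]
    congr 1
  have hBBt : (A * R) * (A * R)ᵀ = A * S * Aᵀ := by
    rw [Matrix.transpose_mul, hsqrtT, Matrix.mul_assoc,
      ← Matrix.mul_assoc R, hRR, ← Matrix.mul_assoc]
  have hsSt : R * Rᵀ = S := by rw [hsqrtT, hRR]
  have hmg : Measure.map (fun x : EuclideanSpace ℝ (Fin d) =>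
        (WithLp.equiv 2 (Fin d → ℝ)).symm (A.mulVec (WithLp.equiv 2 (Fin d → ℝ) x)))
        (multivariateGaussian μ S hS)
      = Measure.map (fun x : Fin d → ℝ =>
          (WithLp.equiv 2 (Fin d → ℝ)).symm (A.mulVec (WithLp.equiv 2 (Fin d → ℝ) μ))
            + (WithLp.equiv 2 (Fin d → ℝ)).symm ((A * R).mulVec x)) ν := by
    rw [hg, Measure.map_map hAmeas (measurable_affine μ R)]
    congr 1
    funext x
    simp only [Function.comp_apply, WithLp.equiv_apply, WithLp.equiv_symm_apply, WithLp.ofLp_add,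
      WithLp.ofLp_toLp, Matrix.mulVec_add, Matrix.mulVec_mulVec, WithLp.toLp_add]
  have key : ∀ t : Fin d → ℝ,
      Complex.exp (((t ⬝ᵥ (A.mulVec ((WithLp.equiv 2 (Fin d → ℝ)) μ)) : ℝ) : ℂ) * Complex.I)
          * Complex.exp (-((t ⬝ᵥ ((A * S * Aᵀ).mulVec t) : ℝ) : ℂ) / 2)
        = Complex.exp (((t ⬝ᵥ ((WithLp.equiv 2 (Fin d → ℝ)) μ) : ℝ) : ℂ) * Complex.I)
            * Complex.exp (-((t ⬝ᵥ (S.mulVec t) : ℝ) : ℂ) / 2) := by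
    intro t
    have h1 := charfun_affine
      ((WithLp.equiv 2 (Fin d → ℝ)).symm (A.mulVec ((WithLp.equiv 2 (Fin d → ℝ)) μ)))
      (A * R) t
    have h2 := charfun_affine μ R t
    rw [← hν, ← hmg, hmap, hg, hν, h2] at h1
    rw [Equiv.apply_symm_apply, quad_form_eq, quad_form_eq, hBBt, hsSt] at h1
    exact h1.symm
  have split : ∀ t : Fin d → ℝ,
      t ⬝ᵥ ((A * S * Aᵀ).mulVec t) = t ⬝ᵥ (S.mulVec t) ∧
      Complex.exp (((t ⬝ᵥ (A.mulVec ((WithLp.equiv 2 (Fin d → ℝ)) μ)) : ℝ) : ℂ) * Complex.I)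
        = Complex.exp (((t ⬝ᵥ ((WithLp.equiv 2 (Fin d → ℝ)) μ) : ℝ) : ℂ) * Complex.I) :=
    fun t => split_exp (key t)
  constructor
  · have hph : ∀ t : Fin d → ℝ,
        t ⬝ᵥ (A.mulVec ((WithLp.equiv 2 (Fin d → ℝ)) μ))
          = t ⬝ᵥ ((WithLp.equiv 2 (Fin d → ℝ)) μ) := by
      intro t
      apply phase_eq
      intro s
      have h := (split (s • t)).2
      rwa [smul_dotProduct, smul_dotProduct, smul_eq_mul, smul_eq_mul] at h
    have hvec : A.mulVec ((WithLp.equiv 2 (Fin d → ℝ)) μ) = (WithLp.equiv 2 (Fin d → ℝ)) μ := by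
      funext i
      have h := hph (Pi.single i 1)
      rwa [single_dotProduct, single_dotProduct, one_mul, one_mul] at h
    rw [hvec]
    exact Equiv.symm_apply_apply _ _
  · refine quad_matrix_eq ?_ hSsymm (fun t => (split t).1)
    rw [Matrix.IsSymm, Matrix.transpose_mul, Matrix.transpose_mul, Matrix.transpose_transpose,
      hSsymm.eq, ← Matrix.mul_assoc]
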